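/- Let f : ℝ³ → [0,∞) be measurable and suppose there are constants C₀ > 0 and δ > 0 with f(y) ≤ C₀ e^{−δ|y|} for all y. Then lim_{|x|→∞} |x| ∫_{ℝ³} f(y)/|x − y| dy = ∫_{ℝ³} f(y) dy. -/

import Mathlib

noncomputable section

open MeasureTheory Real Filter

/-- ℝ³ as a Euclidean space. -/
abbrev R3 : Type := EuclideanSpace ℝ (Fin 3)

/-- The point (a, b, c) ∈ ℝ³. -/
def pt (a b c : ℝ) : R3 := (WithLp.equiv 2 (Fin 3 → ℝ)).symm ![a, b, c]

/-- The Laplacian of `f : ℝ³ → ℝ`, as the sum of the second partial derivatives. -/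
def lap (f : R3 → ℝ) (x : R3) : ℝ :=
  ∑ i : Fin 3, fderiv ℝ (fun y => fderiv ℝ f y (EuclideanSpace.single i 1)) x
    (EuclideanSpace.single i 1)

/-- The Schrödinger–Newton ground state: a pair (U, Ψ) of positive, radially
symmetric C² functions solving ΔU − U + ΨU = 0, ΔΨ + (1/2)U² = 0 on ℝ³,
tending to 0 at infinity, with U(0) = max U, U strictly decreasing in |x| and
|x|e^{|x|}U(x) → λ₀ > 0 as |x| → ∞. -/
structure GroundState (U Ψ : R3 → ℝ) : Prop where
  smoothU : ContDiff ℝ 2 U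
  smoothΨ : ContDiff ℝ 2 Ψ
  posU : ∀ x, 0 < U x
  posΨ : ∀ x, 0 < Ψ x
  radU : ∀ x y : R3, ‖x‖ = ‖y‖ → U x = U y
  radΨ : ∀ x y : R3, ‖x‖ = ‖y‖ → Ψ x = Ψ y
  maxU : ∀ x, U x ≤ U 0
  eqU : ∀ x, lap U x - U x + Ψ x * U x = 0
  eqΨ : ∀ x, lap Ψ x + (1/2) * (U x)^2 = 0
  limU : ∀ ε > 0, ∃ R : ℝ, ∀ x : R3, R ≤ ‖x‖ → |U x| ≤ ε
  limΨ : ∀ ε > 0, ∃ R : ℝ, ∀ x : R3, R ≤ ‖x‖ → |Ψ x| ≤ ε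
  decU : ∀ x y : R3, ‖x‖ < ‖y‖ → U y < U x
  decayU : ∃ lam₀ > (0:ℝ), ∀ ε > 0, ∃ R : ℝ, ∀ x : R3, R ≤ ‖x‖ →
    |‖x‖ * Real.exp ‖x‖ * U x - lam₀| ≤ ε

/-- Condition (H) on the radial potential V, with constants V₀, a, θ, m. -/
def CondH (V : ℝ → ℝ) (V₀ a θ m : ℝ) : Prop :=
  ContinuousOn V (Set.Ioi 0) ∧
  (∃ Cb : ℝ, ∀ ρ ∈ Set.Ioi (0:ℝ), |V ρ| ≤ Cb) ∧
  0 < V₀ ∧ 0 < a ∧ 0 < θ ∧ 1/2 ≤ m ∧ m < 1 ∧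
  (∀ ρ ∈ Set.Ioi (0:ℝ), V₀ ≤ V ρ) ∧
  ∃ C_V > (0:ℝ), ∃ R₀ > (0:ℝ), ∀ ρ : ℝ, R₀ ≤ ρ →
    |V ρ - V₀ - a * ρ ^ (-m)| ≤ C_V * ρ ^ (-(m + θ))

/-- The spike locations ξ_i = (r cos(2iπ/s), r sin(2iπ/s), 0), i = 0, …, s−1
(indexed from 0, so that here `xiP s r 0` is ξ₁ of the paper and the spike
`xiP s r (i-1)` is ξ_i of the paper). -/
def xiP (s : ℕ) (r : ℝ) (i : ℕ) : R3 :=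
  pt (r * Real.cos (2 * π * i / s)) (r * Real.sin (2 * π * i / s)) 0

/-- Rotation by angle θ about the x₃-axis. -/
def rotZ (θ : ℝ) (x : R3) : R3 :=
  pt (Real.cos θ * x 0 - Real.sin θ * x 1) (Real.sin θ * x 0 + Real.cos θ * x 1) (x 2)

/-- The sum of bumps U_r = Σ_{i} U(· − ξ_i). -/
def Ur (U : R3 → ℝ) (s : ℕ) (r : ℝ) (x : R3) : ℝ :=
  ∑ i ∈ Finset.range s, U (x - xiP s r i)

/-- Z_i(x) = −∇U(x−ξ_i)·(cos θ_i, sin θ_i, 0) = ∂/∂r of U(· − ξ_i). -/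
def Zfun (U : R3 → ℝ) (s : ℕ) (r : ℝ) (i : ℕ) (x : R3) : ℝ :=
  -(inner ℝ (gradient U (x - xiP s r i))
      (pt (Real.cos (2 * π * i / s)) (Real.sin (2 * π * i / s)) 0) : ℝ)

/-- Membership in the symmetry class 𝓔_s with the orthogonality conditions. -/
def memEs (U : R3 → ℝ) (s : ℕ) (r : ℝ) (w : R3 → ℝ) : Prop :=
  (∀ x : R3, w (pt (x 0) (-(x 1)) (x 2)) = w x) ∧
  (∀ x : R3, w (pt (x 0) (x 1) (-(x 2))) = w x) ∧
  (∀ x : R3, w (rotZ (2 * π / s) x) = w x) ∧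
  (∀ i ∈ Finset.range s,
    ∫ x : R3, (∫ y : R3,
      ((U (y - xiP s r i))^2 * Zfun U s r i x
        + 2 * U (y - xiP s r i) * Zfun U s r i y * U (x - xiP s r i)) * w x / ‖x - y‖) = 0)
section NPAux

open scoped ENNReal NNReal

private lemma finrankR3 : (Module.finrank ℝ R3 : ℝ) = 3 := by
  simp [R3, finrank_euclideanSpace_fin]

private lemma key_exp_bound {b t : ℝ} (hb : 0 < b) (ht : 0 ≤ t) :
    Real.exp (-b * t) ≤ (max 1 (4 / b)) ^ 4 * (1 + t) ^ (-(4:ℝ)) := by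
  set c := max 1 (4/b) with hcdef
  have hc1 : (1:ℝ) ≤ c := le_max_left _ _
  have hcb : 4 ≤ c * b := by
    have h := le_max_right 1 (4/b)
    rw [div_le_iff₀ hb] at h
    linarith
  have hkey : 1 + t ≤ c * Real.exp (b * t / 4) := by
    have h := Real.add_one_le_exp (b * t / 4)
    nlinarith [mul_le_mul_of_nonneg_left h (show (0:ℝ) ≤ c by linarith)]
  have h4 : (1 + t) ^ (4:ℕ) ≤ c ^ 4 * Real.exp (b * t) := by
    calc (1 + t) ^ (4:ℕ) ≤ (c * Real.exp (b * t / 4)) ^ 4 :=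
          pow_le_pow_left₀ (by positivity) hkey 4
      _ = c ^ 4 * (Real.exp (b * t / 4)) ^ 4 := by ring
      _ = c ^ 4 * Real.exp (b * t) := by
          rw [← Real.exp_nat_mul]; congr 1; push_cast; ring
  have hpos : (0:ℝ) < 1 + t := by linarith
  have hrpow : (1 + t) ^ (-(4:ℝ)) = ((1 + t) ^ (4:ℕ))⁻¹ := by
    rw [Real.rpow_neg hpos.le, ← Real.rpow_natCast]; norm_num
  have h1 : (0:ℝ) < Real.exp (b*t) := Real.exp_pos _
  have h2 : (0:ℝ) < (1+t)^(4:ℕ) := by positivity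
  calc Real.exp (-b * t) = 1 / Real.exp (b * t) := by
        rw [one_div, ← Real.exp_neg]; ring_nf
    _ ≤ c ^ 4 / (1 + t) ^ (4:ℕ) := by
        rw [div_le_div_iff₀ h1 h2]; nlinarith
    _ = c ^ 4 * (1 + t) ^ (-(4:ℝ)) := by rw [hrpow, div_eq_mul_inv]

private lemma integrable_exp_norm {b : ℝ} (hb : 0 < b) :
    Integrable (fun y : R3 => Real.exp (-b * ‖y‖)) := by
  have h4 : (Module.finrank ℝ R3 : ℝ) < 4 := by rw [finrankR3]; norm_num
  refine ((integrable_one_add_norm h4).const_mul ((max 1 (4/b)) ^ 4)).mono' ?_ ?_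
  · exact (Real.continuous_exp.comp (continuous_const.mul continuous_norm)).aestronglyMeasurable
  · filter_upwards with y
    rw [Real.norm_eq_abs, abs_of_pos (Real.exp_pos _)]
    exact key_exp_bound hb (norm_nonneg y)

private lemma integrable_exp_norm_mul {b : ℝ} (hb : 0 < b) :
    Integrable (fun y : R3 => Real.exp (-b * ‖y‖) * ‖y‖) := by
  refine ((integrable_exp_norm (half_pos hb)).const_mul (2/b)).mono' ?_ ?_
  · exact ((Real.continuous_exp.comp (continuous_const.mul continuous_norm)).mul
      continuous_norm).aestronglyMeasurable
  · filter_upwards with y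
    rw [Real.norm_eq_abs, abs_of_nonneg (by positivity)]
    set t := ‖y‖ with htdef
    have ht : 0 ≤ t := norm_nonneg y
    have h1 : t ≤ 2/b * Real.exp (b/2 * t) := by
      have h := Real.add_one_le_exp (b/2 * t)
      have h2 := mul_le_mul_of_nonneg_left h (show (0:ℝ) ≤ 2/b by positivity)
      have h3 : 2/b * (b/2*t+1) = t + 2/b := by field_simp
      have h4 : 0 ≤ 2/b := by positivity
      linarith
    calc Real.exp (-b * t) * t ≤ Real.exp (-b * t) * (2/b * Real.exp (b/2 * t)) := by
          exact mul_le_mul_of_nonneg_left h1 (Real.exp_pos _).le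
      _ = 2/b * (Real.exp (-b * t) * Real.exp (b/2 * t)) := by ring
      _ = 2/b * Real.exp (-(b/2) * t) := by
          rw [← Real.exp_add, show -b*t + b/2*t = -(b/2)*t by ring]

private lemma integrableOn_inv_norm_ball :
    IntegrableOn (fun z : R3 => ‖z‖⁻¹) (Metric.ball (0:R3) 1) := by
  have hmeas : Measurable fun z : R3 => ‖z‖⁻¹ := measurable_norm.inv
  constructor
  · exact hmeas.aestronglyMeasurable
  · rw [hasFiniteIntegral_iff_norm]
    have hnn : ∀ z : R3, (0:ℝ) ≤ ‖z‖⁻¹ := fun z => by positivity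
    have hcong : ∀ z : R3, ENNReal.ofReal ‖‖z‖⁻¹‖ = ENNReal.ofReal (‖z‖⁻¹) := fun z => by
      rw [Real.norm_eq_abs, abs_of_nonneg (hnn z)]
    simp_rw [hcong]
    set ν := (volume : Measure R3).restrict (Metric.ball (0:R3) 1) with hν
    rw [lintegral_eq_lintegral_meas_le ν (Eventually.of_forall hnn) hmeas.aemeasurable]
    set mB := (volume : Measure R3) (Metric.ball (0:R3) 1) with hmB
    have hmBlt : mB < ∞ := measure_ball_lt_top
    have hb1 : ∀ t : ℝ, ν {a : R3 | t ≤ ‖a‖⁻¹} ≤ mB := fun t => by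
      calc ν {a : R3 | t ≤ ‖a‖⁻¹} ≤ ν Set.univ := measure_mono (Set.subset_univ _)
        _ = mB := by rw [hν, Measure.restrict_apply_univ]
    have hb2 : ∀ t : ℝ, 0 < t → ν {a : R3 | t ≤ ‖a‖⁻¹} ≤ ENNReal.ofReal (t⁻¹ ^ 3) * mB := by
      intro t ht
      have hsub : {a : R3 | t ≤ ‖a‖⁻¹} ⊆ Metric.closedBall (0:R3) t⁻¹ := by
        intro a ha
        simp only [Set.mem_setOf_eq] at ha
        rcases eq_or_ne a 0 with rfl | h0
        · simp [Metric.mem_closedBall]; positivity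
        · have hna : 0 < ‖a‖ := norm_pos_iff.2 h0
          rw [Metric.mem_closedBall, dist_zero_right]
          rw [le_inv_comm₀ ht hna] at ha  -- maybe wrong name
          exact ha
      calc ν {a : R3 | t ≤ ‖a‖⁻¹} ≤ (volume : Measure R3) {a : R3 | t ≤ ‖a‖⁻¹} :=
            Measure.restrict_le_self _
        _ ≤ (volume : Measure R3) (Metric.closedBall (0:R3) t⁻¹) := measure_mono hsub
        _ = ENNReal.ofReal (t⁻¹ ^ Module.finrank ℝ R3) * mB :=
            Measure.addHaar_closedBall _ _ (by positivity)
        _ = ENNReal.ofReal (t⁻¹ ^ 3) * mB := by norm_num [finrank_euclideanSpace_fin]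
    calc ∫⁻ t in Set.Ioi (0:ℝ), ν {a : R3 | t ≤ ‖a‖⁻¹}
        ≤ ∫⁻ t in Set.Ioc (0:ℝ) 1 ∪ Set.Ioi 1, ν {a : R3 | t ≤ ‖a‖⁻¹} :=
          lintegral_mono_set Set.Ioi_subset_Ioc_union_Ioi
      _ ≤ (∫⁻ t in Set.Ioc (0:ℝ) 1, ν {a : R3 | t ≤ ‖a‖⁻¹})
            + ∫⁻ t in Set.Ioi (1:ℝ), ν {a : R3 | t ≤ ‖a‖⁻¹} := lintegral_union_le _ _ _
      _ < ∞ := by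
          refine ENNReal.add_lt_top.2 ⟨?_, ?_⟩
          · calc (∫⁻ t in Set.Ioc (0:ℝ) 1, ν {a : R3 | t ≤ ‖a‖⁻¹})
                ≤ ∫⁻ _ in Set.Ioc (0:ℝ) 1, mB := lintegral_mono fun t => hb1 t
              _ = mB * volume (Set.Ioc (0:ℝ) 1) := setLIntegral_const _ _
              _ < ∞ := by
                  rw [Real.volume_Ioc]
                  exact ENNReal.mul_lt_top hmBlt (by norm_num)
          · calc (∫⁻ t in Set.Ioi (1:ℝ), ν {a : R3 | t ≤ ‖a‖⁻¹})
                ≤ ∫⁻ t in Set.Ioi (1:ℝ), ENNReal.ofReal (t ^ (-(3:ℝ))) * mB := by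
                  refine setLIntegral_mono' measurableSet_Ioi fun t ht => ?_
                  have ht1 : (1:ℝ) < t := ht
                  have ht0 : (0:ℝ) < t := lt_trans one_pos ht1
                  refine (hb2 t ht0).trans ?_
                  gcongr
                  rw [Real.rpow_neg ht0.le, show (3:ℝ) = ((3:ℕ):ℝ) by norm_num,
                    Real.rpow_natCast, ← inv_pow]
              _ = (∫⁻ t in Set.Ioi (1:ℝ), ENNReal.ofReal (t ^ (-(3:ℝ)))) * mB :=
                  lintegral_mul_const' _ _ hmBlt.ne
              _ < ∞ := by
                  refine ENNReal.mul_lt_top ?_ hmBlt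
                  exact (integrableOn_Ioi_rpow_of_lt (by norm_num) one_pos).setLIntegral_lt_top

private lemma indicator_shift (x : R3) :
    (fun y : R3 => (Metric.ball x 1).indicator (fun y => ‖x - y‖⁻¹) y)
      = fun y : R3 => (Metric.ball (0:R3) 1).indicator (fun z => ‖z‖⁻¹) (x - y) := by
  funext y
  have hmem : y ∈ Metric.ball x 1 ↔ x - y ∈ Metric.ball (0:R3) 1 := by
    rw [Metric.mem_ball, mem_ball_zero_iff, dist_eq_norm, norm_sub_rev]
  by_cases h : y ∈ Metric.ball x 1
  · rw [Set.indicator_of_mem h, Set.indicator_of_mem (hmem.1 h)]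
  · rw [Set.indicator_of_notMem h, Set.indicator_of_notMem (fun hc => h (hmem.2 hc))]

private lemma integrable_inv_shift (x : R3) :
    Integrable (fun y : R3 => (Metric.ball x 1).indicator (fun y => ‖x - y‖⁻¹) y) := by
  rw [indicator_shift x]
  exact (integrableOn_inv_norm_ball.integrable_indicator measurableSet_ball).comp_sub_left x

private lemma integral_inv_shift (x : R3) :
    ∫ y : R3, (Metric.ball x 1).indicator (fun y => ‖x - y‖⁻¹) y
      = ∫ z : R3, (Metric.ball (0:R3) 1).indicator (fun z => ‖z‖⁻¹) z := by
  rw [indicator_shift x]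
  exact integral_sub_left_eq_self _ _ x


set_option maxHeartbeats 1600000

/-- lim_{|x|→∞} |x| ∫ f(y)/|x−y| dy = ∫ f. -/
theorem newtonian_potential_asymptotics
    (f : R3 → ℝ) (hmeas : Measurable f) (hnonneg : ∀ x, 0 ≤ f x)
    (C₀ δ : ℝ) (hC₀ : 0 < C₀) (hδ : 0 < δ)
    (hdecay : ∀ y : R3, f y ≤ C₀ * Real.exp (-δ * ‖y‖)) :
    ∀ ε > (0:ℝ), ∃ R > (0:ℝ), ∀ x : R3, R ≤ ‖x‖ →
      |‖x‖ * (∫ y : R3, f y / ‖x - y‖) - ∫ y : R3, f y| ≤ ε := by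
  intro ε hε
  have hδ2 : 0 < δ/2 := by positivity
  have hfint : Integrable f := by
    refine ((integrable_exp_norm hδ).const_mul C₀).mono' hmeas.aestronglyMeasurable ?_
    filter_upwards with y
    rw [Real.norm_eq_abs, abs_of_nonneg (hnonneg y)]
    exact hdecay y
  have hfnorm : Integrable (fun y : R3 => f y * ‖y‖) := by
    refine ((integrable_exp_norm_mul hδ).const_mul C₀).mono'
      (hmeas.mul measurable_norm).aestronglyMeasurable ?_
    filter_upwards with y
    rw [Real.norm_eq_abs, abs_of_nonneg (mul_nonneg (hnonneg y) (norm_nonneg y))]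
    calc f y * ‖y‖ ≤ C₀ * Real.exp (-δ * ‖y‖) * ‖y‖ :=
          mul_le_mul_of_nonneg_right (hdecay y) (norm_nonneg y)
      _ = C₀ * (Real.exp (-δ * ‖y‖) * ‖y‖) := by ring
  obtain ⟨A, hA_def⟩ : ∃ A : ℝ, A = ∫ y : R3, f y * ‖y‖ := ⟨_, rfl⟩
  obtain ⟨c, hc_def⟩ : ∃ c : ℝ,
    c = ∫ z : R3, (Metric.ball (0:R3) 1).indicator (fun z => ‖z‖⁻¹) z := ⟨_, rfl⟩
  obtain ⟨I, hI_def⟩ : ∃ I : ℝ, I = ∫ y : R3, Real.exp (-(δ/2) * ‖y‖) * ‖y‖ := ⟨_, rfl⟩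
  have hA : 0 ≤ A := hA_def ▸ integral_nonneg fun y => mul_nonneg (hnonneg y) (norm_nonneg y)
  have hc : 0 ≤ c := hc_def ▸ integral_nonneg fun z =>
    Set.indicator_nonneg (fun z _ => by positivity) z
  have hI : 0 ≤ I := hI_def ▸ integral_nonneg fun y => by positivity
  obtain ⟨B, hB_def⟩ : ∃ B : ℝ, B = C₀ * (2/δ * c + I) + 1 := ⟨_, rfl⟩
  have hB : 0 < B := by
    have h0 : 0 ≤ C₀ * (2/δ * c + I) := mul_nonneg hC₀.le (by positivity)
    linarith [hB_def.ge, hB_def.le]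
  refine ⟨max (max 1 (4*A/ε + 1)) (4/δ * Real.log (2*B/ε) + 1), ?_, ?_⟩
  · exact lt_of_lt_of_le one_pos ((le_max_left 1 _).trans (le_max_left _ _))
  intro x hx
  have hx1 : 1 ≤ ‖x‖ := ((le_max_left 1 _).trans (le_max_left _ _)).trans hx
  have hx0 : 0 < ‖x‖ := lt_of_lt_of_le one_pos hx1
  have hxA : 4*A/ε + 1 ≤ ‖x‖ := ((le_max_right 1 _).trans (le_max_left _ _)).trans hx
  have hxB : 4/δ * Real.log (2*B/ε) + 1 ≤ ‖x‖ := (le_max_right _ _).trans hx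
  obtain ⟨e₁, he₁⟩ : ∃ e₁ : ℝ, e₁ = Real.exp (-(δ/4) * ‖x‖) := ⟨_, rfl⟩
  have he₁pos : 0 < e₁ := he₁ ▸ Real.exp_pos _
  have hind_nonneg : ∀ y : R3, 0 ≤ (Metric.ball x 1).indicator (fun y : R3 => ‖x - y‖⁻¹) y :=
    fun y => Set.indicator_nonneg (fun z _ => by positivity) y
  have hsec_nonneg : ∀ y : R3, 0 ≤ C₀ * e₁ *
      (2/δ * (Metric.ball x 1).indicator (fun y : R3 => ‖x - y‖⁻¹) y
        + Real.exp (-(δ/2) * ‖y‖) * ‖y‖) := by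
    intro y
    have h1 : 0 ≤ 2/δ * (Metric.ball x 1).indicator (fun y : R3 => ‖x - y‖⁻¹) y :=
      mul_nonneg (by positivity) (hind_nonneg y)
    have h2 : 0 ≤ Real.exp (-(δ/2) * ‖y‖) * ‖y‖ := by positivity
    exact mul_nonneg (mul_nonneg hC₀.le he₁pos.le) (by linarith)
  have hfirst_nonneg : ∀ y : R3, 0 ≤ 2/‖x‖ * (f y * ‖y‖) := fun y =>
    mul_nonneg (by positivity) (mul_nonneg (hnonneg y) (norm_nonneg y))
  have hptw : ∀ y : R3, |‖x‖ * f y / ‖x - y‖ - f y|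
      ≤ 2/‖x‖ * (f y * ‖y‖)
        + C₀ * e₁ * (2/δ * (Metric.ball x 1).indicator (fun y : R3 => ‖x - y‖⁻¹) y
          + Real.exp (-(δ/2) * ‖y‖) * ‖y‖) := by
    intro y
    rcases eq_or_ne y x with h | hyx
    · subst h
      rw [sub_self, norm_zero, div_zero, zero_sub, abs_neg, abs_of_nonneg (hnonneg y)]
      have h1 : 2/‖y‖ * (f y * ‖y‖) = 2 * f y := by
        field_simp
      linarith [hsec_nonneg y, hnonneg y]
    · have hxy : 0 < ‖x - y‖ := by
        rw [norm_pos_iff]; exact sub_ne_zero.2 (Ne.symm hyx)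
      have htri : |‖x‖ - ‖x - y‖| ≤ ‖y‖ := by
        have h := abs_norm_sub_norm_le x (x - y)
        simpa using h
      have hstep : |‖x‖ * f y / ‖x - y‖ - f y| ≤ f y * ‖y‖ / ‖x - y‖ := by
        have heq : ‖x‖ * f y / ‖x - y‖ - f y = f y * (‖x‖ - ‖x - y‖) / ‖x - y‖ := by
          field_simp
        rw [heq, abs_div, abs_of_pos hxy, abs_mul, abs_of_nonneg (hnonneg y)]
        gcongr
        exact hnonneg y
      rcases le_or_gt ‖y‖ (‖x‖/2) with hy | hy
      · have hxy2 : ‖x‖/2 ≤ ‖x - y‖ := by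
          have h := norm_sub_norm_le x y
          linarith
        have hmain : f y * ‖y‖ / ‖x - y‖ ≤ 2/‖x‖ * (f y * ‖y‖) := by
          have h1 : f y * ‖y‖ / ‖x - y‖ ≤ f y * ‖y‖ / (‖x‖/2) := by
            gcongr
            exact mul_nonneg (hnonneg y) (norm_nonneg y)
          have h2 : f y * ‖y‖ / (‖x‖/2) = 2/‖x‖ * (f y * ‖y‖) := by
            field_simp
          linarith
        refine hstep.trans (hmain.trans ?_)
        linarith [hsec_nonneg y]
      · have hf2 : f y ≤ C₀ * e₁ * Real.exp (-(δ/2) * ‖y‖) := by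
          have hmono : Real.exp (-(δ/2) * ‖y‖) ≤ e₁ := by
            rw [he₁]
            exact Real.exp_le_exp.2 (by nlinarith)
          calc f y ≤ C₀ * Real.exp (-δ * ‖y‖) := hdecay y
            _ = C₀ * (Real.exp (-(δ/2) * ‖y‖) * Real.exp (-(δ/2) * ‖y‖)) := by
                rw [← Real.exp_add]; congr 1; ring
            _ ≤ C₀ * (e₁ * Real.exp (-(δ/2) * ‖y‖)) := by
                have := mul_le_mul_of_nonneg_right hmono (Real.exp_pos (-(δ/2)*‖y‖)).le
                nlinarith [hC₀.le]
            _ = C₀ * e₁ * Real.exp (-(δ/2) * ‖y‖) := by ring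
        have hstep2 : f y * ‖y‖ / ‖x - y‖
            ≤ C₀ * e₁ * (Real.exp (-(δ/2) * ‖y‖) * ‖y‖ / ‖x - y‖) := by
          calc f y * ‖y‖ / ‖x - y‖
              ≤ C₀ * e₁ * Real.exp (-(δ/2) * ‖y‖) * ‖y‖ / ‖x - y‖ := by
                gcongr
            _ = C₀ * e₁ * (Real.exp (-(δ/2) * ‖y‖) * ‖y‖ / ‖x - y‖) := by ring
        have hG : Real.exp (-(δ/2) * ‖y‖) * ‖y‖ / ‖x - y‖
            ≤ 2/δ * (Metric.ball x 1).indicator (fun y : R3 => ‖x - y‖⁻¹) y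
              + Real.exp (-(δ/2) * ‖y‖) * ‖y‖ := by
          rcases lt_or_ge ‖x - y‖ 1 with hb1 | hb1
          · have hmem : y ∈ Metric.ball x 1 := by
              rw [Metric.mem_ball, dist_eq_norm, norm_sub_rev]
              exact hb1
            rw [Set.indicator_of_mem hmem]
            have hEt : Real.exp (-(δ/2) * ‖y‖) * ‖y‖ ≤ 2/δ := by
              have h := Real.add_one_le_exp (δ/2 * ‖y‖)
              have h2 : ‖y‖ ≤ 2/δ * Real.exp (δ/2 * ‖y‖) := by
                have h3 : 2/δ * (δ/2*‖y‖+1) = ‖y‖ + 2/δ := by field_simp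
                have h4 := mul_le_mul_of_nonneg_left h (show (0:ℝ) ≤ 2/δ by positivity)
                have h5 : (0:ℝ) ≤ 2/δ := by positivity
                linarith
              calc Real.exp (-(δ/2)*‖y‖) * ‖y‖
                  ≤ Real.exp (-(δ/2)*‖y‖) * (2/δ * Real.exp (δ/2*‖y‖)) :=
                    mul_le_mul_of_nonneg_left h2 (Real.exp_pos _).le
                _ = 2/δ * Real.exp (-(δ/2)*‖y‖ + δ/2*‖y‖) := by rw [Real.exp_add]; ring
                _ = 2/δ := by norm_num
            have hdivb : Real.exp (-(δ/2) * ‖y‖) * ‖y‖ / ‖x - y‖ ≤ 2/δ * ‖x - y‖⁻¹ := by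
              rw [div_eq_mul_inv]
              exact mul_le_mul_of_nonneg_right hEt (by positivity)
            have hE2 : 0 ≤ Real.exp (-(δ/2) * ‖y‖) * ‖y‖ := by positivity
            linarith
          · have hnm : y ∉ Metric.ball x 1 := by
              rw [Metric.mem_ball, dist_eq_norm, norm_sub_rev]
              exact not_lt.2 hb1
            rw [Set.indicator_of_notMem hnm, mul_zero, zero_add]
            exact div_le_self (by positivity) hb1
        refine hstep.trans (hstep2.trans ?_)
        have h6 := mul_le_mul_of_nonneg_left hG (mul_nonneg hC₀.le he₁pos.le)
        linarith [hfirst_nonneg y]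
  have hsec_int : Integrable (fun y : R3 =>
      2/δ * (Metric.ball x 1).indicator (fun y : R3 => ‖x - y‖⁻¹) y
        + Real.exp (-(δ/2) * ‖y‖) * ‖y‖) :=
    ((integrable_inv_shift x).const_mul (2/δ)).add (integrable_exp_norm_mul hδ2)
  have hbound_int : Integrable (fun y : R3 =>
      2/‖x‖ * (f y * ‖y‖)
        + C₀ * e₁ * (2/δ * (Metric.ball x 1).indicator (fun y : R3 => ‖x - y‖⁻¹) y
          + Real.exp (-(δ/2) * ‖y‖) * ‖y‖)) :=
    (hfnorm.const_mul (2/‖x‖)).add (hsec_int.const_mul (C₀ * e₁))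
  have hFm : AEStronglyMeasurable (fun y : R3 => ‖x‖ * f y / ‖x - y‖) volume := by
    apply Measurable.aestronglyMeasurable
    have hsub : Measurable fun y : R3 => ‖x - y‖ := (measurable_const.sub measurable_id).norm
    exact (measurable_const.mul hmeas).div hsub
  have hFint : Integrable (fun y : R3 => ‖x‖ * f y / ‖x - y‖) := by
    refine (hfint.add hbound_int).mono' hFm ?_
    filter_upwards with y
    have h := abs_le.1 (hptw y)
    have hF0 : 0 ≤ ‖x‖ * f y / ‖x - y‖ :=
      div_nonneg (mul_nonneg (norm_nonneg x) (hnonneg y)) (norm_nonneg _)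
    rw [Real.norm_eq_abs, abs_of_nonneg hF0]
    simp only [Pi.add_apply]
    linarith [h.2]
  have h1 : ‖x‖ * (∫ y : R3, f y / ‖x - y‖) = ∫ y : R3, ‖x‖ * f y / ‖x - y‖ := by
    rw [← integral_const_mul]
    congr 1
    funext y
    rw [mul_div_assoc]
  have hbound_val : (∫ y : R3,
      (2/‖x‖ * (f y * ‖y‖)
        + C₀ * e₁ * (2/δ * (Metric.ball x 1).indicator (fun y : R3 => ‖x - y‖⁻¹) y
          + Real.exp (-(δ/2) * ‖y‖) * ‖y‖)))
      = 2/‖x‖ * A + C₀ * e₁ * (2/δ * c + I) := by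
    rw [integral_add (hfnorm.const_mul (2/‖x‖)) (hsec_int.const_mul (C₀*e₁)),
      integral_const_mul, integral_const_mul,
      integral_add ((integrable_inv_shift x).const_mul (2/δ)) (integrable_exp_norm_mul hδ2),
      integral_const_mul, integral_inv_shift x, ← hA_def, ← hc_def, ← hI_def]
  have hkey : |‖x‖ * (∫ y : R3, f y / ‖x - y‖) - ∫ y : R3, f y|
      ≤ 2/‖x‖ * A + C₀ * e₁ * (2/δ * c + I) := by
    rw [h1, ← integral_sub hFint hfint]
    have habs : |∫ y : R3, (‖x‖ * f y / ‖x - y‖ - f y)|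
        ≤ ∫ y : R3, |‖x‖ * f y / ‖x - y‖ - f y| := by
      simpa [Real.norm_eq_abs] using
        norm_integral_le_integral_norm (fun y : R3 => ‖x‖ * f y / ‖x - y‖ - f y)
    refine habs.trans ?_
    rw [← hbound_val]
    exact integral_mono (hFint.sub hfint).abs hbound_int hptw
  have hA2 : 2/‖x‖ * A ≤ ε/2 := by
    rw [div_mul_eq_mul_div, div_le_iff₀ hx0]
    have h := mul_le_mul_of_nonneg_left hxA hε.le
    have h2 : ε * (4*A/ε + 1) = 4*A + ε := by field_simp
    nlinarith
  have hB2 : C₀ * e₁ * (2/δ * c + I) ≤ ε/2 := by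
    have hexp : e₁ ≤ ε/(2*B) := by
      rw [he₁, show ε/(2*B) = Real.exp (Real.log (ε/(2*B))) from
        (Real.exp_log (by positivity)).symm]
      apply Real.exp_le_exp.2
      have hlog : Real.log (ε/(2*B)) = - Real.log (2*B/ε) := by
        rw [← Real.log_inv, inv_div]
      rw [hlog]
      have h := mul_le_mul_of_nonneg_left hxB (show (0:ℝ) ≤ δ/4 by positivity)
      have h2 : δ/4 * (4/δ * Real.log (2*B/ε) + 1) = Real.log (2*B/ε) + δ/4 := by
        field_simp
      nlinarith
    have hle : C₀ * (2/δ * c + I) ≤ B := by rw [hB_def]; linarith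
    calc C₀ * e₁ * (2/δ * c + I) = C₀ * (2/δ * c + I) * e₁ := by ring
      _ ≤ B * (ε/(2*B)) := mul_le_mul hle hexp he₁pos.le hB.le
      _ = ε/2 := by field_simp
  linarith [hkey, hA2, hB2]

end NPAux
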